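/- (Theorem: explicit formula for generalized tori of second type.) Let s, t ∈ ℝ, β = √(t² + 2·cosh s), and let e₁, e₂, e₃, e₄ be the standard orthonormal basis of ℝ⁴. Let z : ℝ → ℝ solve z'' + 4·sinh z = 0, z(0) = s, z'(0) = 2t, and let p : ℝ → ℝ⁴ solve p''(u) + z'(u)·p'(u) + β²·p(u) = 0 with p(0) = (1/β²)·( e^{−s/2}(t² + e^{−s})·e₁ − t·e₂ − e^{−s/2}·e₄ ) and p'(0) = −t·e^{−s/2}·e₁ + e₂. Suppose l, n : ℝ² → ℝ⁴ are smooth maps satisfying l_{uu} − (z'(u)/2)·l_u + e^{z(u)}·l − n = 0, l_{uv} − (z'(u)/2)·l_v = 0, l_{vv} + (z'(u)/2)·l_u + e^{z(u)}·l + n = 0, n_u + e^{−z(u)}·l_u = 0, n_v − e^{−z(u)}·l_v = 0, with initial conditions l(0,0) = e₁, l_u(0,0) = e^{s/2}·e₂, l_v(0,0) = e^{s/2}·e₃, n(0,0) = e₄. Then l(u,v) = e^{z(u)/2}·p(u) + (e^{z(u)/2}/β²)·[ cos(βv)·( e^{s/2}·e₁ + t·e₂ + e^{−s/2}·e₄ )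 + β·sin(βv)·e₃ ] for all (u,v) ∈ ℝ². -/

import Mathlib

open Real
open scoped InnerProductSpace

noncomputable section

/-- ℝ⁴ with the standard Euclidean inner product. -/
abbrev E4 := EuclideanSpace ℝ (Fin 4)

/-- Partial derivative with respect to the first parameter. -/
def pu {F : Type*} [NormedAddCommGroup F] [NormedSpace ℝ F]
    (f : ℝ × ℝ → F) (p : ℝ × ℝ) : F := fderiv ℝ f p (1, 0)

/-- Partial derivative with respect to the second parameter. -/
def pv {F : Type*} [NormedAddCommGroup F] [NormedSpace ℝ F]
    (f : ℝ × ℝ → F) (p : ℝ × ℝ) : F := fderiv ℝ f p (0, 1)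

/-- The standard orthonormal basis vectors of `ℝ⁴` (`ee 0 = e₁`, …, `ee 3 = e₄`). -/
def ee (i : Fin 4) : E4 := EuclideanSpace.single i (1 : ℝ)

section Aux

variable {F : Type*} [NormedAddCommGroup F] [NormedSpace ℝ F]

lemma hasDerivAt_slice_u {f : ℝ × ℝ → F} (hf : Differentiable ℝ f) (u v : ℝ) :
    HasDerivAt (fun x => f (x, v)) (pu f (u, v)) u := by
  have h1 : HasDerivAt (fun x : ℝ => ((x, v) : ℝ × ℝ)) ((1:ℝ), (0:ℝ)) u :=
    (hasDerivAt_id u).prodMk (hasDerivAt_const u v)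
  exact (hf (u, v)).hasFDerivAt.comp_hasDerivAt u h1

lemma hasDerivAt_slice_v {f : ℝ × ℝ → F} (hf : Differentiable ℝ f) (u v : ℝ) :
    HasDerivAt (fun y => f (u, y)) (pv f (u, v)) v := by
  have h1 : HasDerivAt (fun y : ℝ => ((u, y) : ℝ × ℝ)) ((0:ℝ), (1:ℝ)) v :=
    (hasDerivAt_const v u).prodMk (hasDerivAt_id v)
  exact (hf (u, v)).hasFDerivAt.comp_hasDerivAt v h1

lemma contDiff_pu {f : ℝ × ℝ → F} (hf : ContDiff ℝ (⊤ : ℕ∞) f) :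
    ContDiff ℝ (⊤ : ℕ∞) (pu f) :=
  (hf.fderiv_right (m := (⊤ : ℕ∞)) (by simp)).clm_apply contDiff_const

lemma contDiff_pv {f : ℝ × ℝ → F} (hf : ContDiff ℝ (⊤ : ℕ∞) f) :
    ContDiff ℝ (⊤ : ℕ∞) (pv f) :=
  (hf.fderiv_right (m := (⊤ : ℕ∞)) (by simp)).clm_apply contDiff_const

lemma fderiv_apply_dir {f : ℝ × ℝ → F} (hf : ContDiff ℝ (⊤ : ℕ∞) f)
    (q : ℝ × ℝ) (w w' : ℝ × ℝ) :
    fderiv ℝ (fun q' => fderiv ℝ f q' w) q w' = fderiv ℝ (fderiv ℝ f) q w' w := by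
  have h2 : HasFDerivAt (fderiv ℝ f) (fderiv ℝ (fderiv ℝ f) q) q :=
    (((hf.fderiv_right (m := (⊤ : ℕ∞)) (by simp)).differentiable
      (by simp)) q).hasFDerivAt
  have h3 := ((ContinuousLinearMap.apply ℝ F w).hasFDerivAt.comp q h2)
  have h4 : fderiv ℝ (fun q' => fderiv ℝ f q' w) q
      = (ContinuousLinearMap.apply ℝ F w).comp (fderiv ℝ (fderiv ℝ f) q) := h3.fderiv
  rw [h4]; rfl

lemma pu_pv_comm {f : ℝ × ℝ → F} (hf : ContDiff ℝ (⊤ : ℕ∞) f) (q : ℝ × ℝ) :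
    pu (pv f) q = pv (pu f) q := by
  have hdf : Differentiable ℝ f := hf.differentiable (by simp)
  have h2 : HasFDerivAt (fderiv ℝ f) (fderiv ℝ (fderiv ℝ f) q) q :=
    (((hf.fderiv_right (m := (⊤ : ℕ∞)) (by simp)).differentiable
      (by simp)) q).hasFDerivAt
  have hsymm := second_derivative_symmetric (fun y => (hdf y).hasFDerivAt) h2 (1,0) (0,1)
  show fderiv ℝ (fun q' => fderiv ℝ f q' (0,1)) q (1,0)
      = fderiv ℝ (fun q' => fderiv ℝ f q' (1,0)) q (0,1)
  rw [fderiv_apply_dir hf, fderiv_apply_dir hf]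
  exact hsymm

omit [NormedSpace ℝ F] in
lemma dist_bound_aux {x y : F × F × F × F} :
    ‖x.1 - y.1‖ ≤ dist x y ∧ ‖x.2.1 - y.2.1‖ ≤ dist x y ∧
    ‖x.2.2.1 - y.2.2.1‖ ≤ dist x y ∧ ‖x.2.2.2 - y.2.2.2‖ ≤ dist x y := by
  rw [dist_eq_norm]
  exact ⟨norm_fst_le (x - y),
    le_trans (norm_fst_le ((x - y).2)) (norm_snd_le (x - y)),
    le_trans (le_trans (norm_fst_le ((x - y).2.2)) (norm_snd_le ((x - y).2)))
      (norm_snd_le (x - y)),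
    le_trans (le_trans (norm_snd_le ((x - y).2.2)) (norm_snd_le ((x - y).2)))
      (norm_snd_le (x - y))⟩

lemma lipA {c₁ c₂ c₃ C : ℝ} (h₁ : |c₁| ≤ C) (h₂ : |c₂| ≤ C) (h₃ : |c₃| ≤ C) :
    LipschitzWith (Real.toNNReal (2*C+1))
      (fun x : F × F × F × F =>
        (x.2.1, c₁ • x.2.1 - c₂ • x.1 + x.2.2.2, c₁ • x.2.2.1, -(c₃ • x.2.1))) := by
  have hC : 0 ≤ C := le_trans (abs_nonneg _) h₁
  apply LipschitzWith.of_dist_le_mul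
  intro x y
  obtain ⟨e1, e2, e3, e4⟩ := dist_bound_aux (x := x) (y := y)
  have hd : 0 ≤ dist x y := dist_nonneg
  rw [Real.coe_toNNReal _ (by linarith)]
  rw [Prod.dist_eq, Prod.dist_eq, Prod.dist_eq]
  rw [show dist x y = ‖x - y‖ from dist_eq_norm x y] at e1 e2 e3 e4 hd ⊢
  have k1 : dist x.2.1 y.2.1 ≤ (2*C+1) * ‖x - y‖ := by rw [dist_eq_norm]; nlinarith
  have k2 : dist (c₁ • x.2.1 - c₂ • x.1 + x.2.2.2) (c₁ • y.2.1 - c₂ • y.1 + y.2.2.2)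
      ≤ (2*C+1) * ‖x - y‖ := by
    rw [dist_eq_norm]
    calc ‖(c₁ • x.2.1 - c₂ • x.1 + x.2.2.2) - (c₁ • y.2.1 - c₂ • y.1 + y.2.2.2)‖
        = ‖c₁ • (x.2.1 - y.2.1) + (-c₂) • (x.1 - y.1) + (x.2.2.2 - y.2.2.2)‖ := by
          congr 1; module
      _ ≤ ‖c₁ • (x.2.1 - y.2.1)‖ + ‖(-c₂) • (x.1 - y.1)‖ + ‖x.2.2.2 - y.2.2.2‖ :=
          norm_add₃_le
      _ ≤ (2*C+1) * ‖x - y‖ := by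
          rw [norm_smul, norm_smul]
          simp only [Real.norm_eq_abs, abs_neg]
          have b1 := e2
          have b2 := e1
          have b3 := e4
          have n1 : (0:ℝ) ≤ ‖x - y‖ := norm_nonneg _
          nlinarith [abs_nonneg c₁, abs_nonneg c₂, norm_nonneg (x.2.1 - y.2.1),
            norm_nonneg (x.1 - y.1)]
  have k3 : dist (c₁ • x.2.2.1) (c₁ • y.2.2.1) ≤ (2*C+1) * ‖x - y‖ := by
    rw [dist_eq_norm, ← smul_sub, norm_smul, Real.norm_eq_abs]
    nlinarith [abs_nonneg c₁, norm_nonneg (x.2.2.1 - y.2.2.1)]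
  have k4 : dist (-(c₃ • x.2.1)) (-(c₃ • y.2.1)) ≤ (2*C+1) * ‖x - y‖ := by
    rw [dist_neg_neg, dist_eq_norm, ← smul_sub, norm_smul, Real.norm_eq_abs]
    nlinarith [abs_nonneg c₃, norm_nonneg (x.2.1 - y.2.1)]
  exact max_le k1 (max_le k2 (max_le k3 k4))

lemma lipB {c₁ c₂ c₃ C : ℝ} (h₁ : |c₁| ≤ C) (h₂ : |c₂| ≤ C) (h₃ : |c₃| ≤ C) :
    LipschitzWith (Real.toNNReal (2*C+1))
      (fun x : F × F × F × F =>
        (x.2.2.1, c₁ • x.2.2.1, -(c₁ • x.2.1) - c₂ • x.1 - x.2.2.2, c₃ • x.2.2.1)) := by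
  have hC : 0 ≤ C := le_trans (abs_nonneg _) h₁
  apply LipschitzWith.of_dist_le_mul
  intro x y
  obtain ⟨e1, e2, e3, e4⟩ := dist_bound_aux (x := x) (y := y)
  have hd : 0 ≤ dist x y := dist_nonneg
  rw [Real.coe_toNNReal _ (by linarith)]
  rw [Prod.dist_eq, Prod.dist_eq, Prod.dist_eq]
  rw [show dist x y = ‖x - y‖ from dist_eq_norm x y] at e1 e2 e3 e4 hd ⊢
  have k1 : dist x.2.2.1 y.2.2.1 ≤ (2*C+1) * ‖x - y‖ := by rw [dist_eq_norm]; nlinarith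
  have k2 : dist (c₁ • x.2.2.1) (c₁ • y.2.2.1) ≤ (2*C+1) * ‖x - y‖ := by
    rw [dist_eq_norm, ← smul_sub, norm_smul, Real.norm_eq_abs]
    nlinarith [abs_nonneg c₁, norm_nonneg (x.2.2.1 - y.2.2.1)]
  have k3 : dist (-(c₁ • x.2.1) - c₂ • x.1 - x.2.2.2) (-(c₁ • y.2.1) - c₂ • y.1 - y.2.2.2)
      ≤ (2*C+1) * ‖x - y‖ := by
    rw [dist_eq_norm]
    calc ‖(-(c₁ • x.2.1) - c₂ • x.1 - x.2.2.2) - (-(c₁ • y.2.1) - c₂ • y.1 - y.2.2.2)‖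
        = ‖(-c₁) • (x.2.1 - y.2.1) + (-c₂) • (x.1 - y.1) + (-(1:ℝ)) • (x.2.2.2 - y.2.2.2)‖ := by
          congr 1; module
      _ ≤ ‖(-c₁) • (x.2.1 - y.2.1)‖ + ‖(-c₂) • (x.1 - y.1)‖ + ‖(-(1:ℝ)) • (x.2.2.2 - y.2.2.2)‖ :=
          norm_add₃_le
      _ ≤ (2*C+1) * ‖x - y‖ := by
          rw [norm_smul, norm_smul, norm_smul]
          simp only [Real.norm_eq_abs, abs_neg, abs_one, one_mul]
          have b1 := e2
          have b2 := e1
          have b3 := e4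
          have n1 : (0:ℝ) ≤ ‖x - y‖ := norm_nonneg _
          nlinarith [abs_nonneg c₁, abs_nonneg c₂, norm_nonneg (x.2.1 - y.2.1),
            norm_nonneg (x.1 - y.1)]
  have k4 : dist (c₃ • x.2.2.1) (c₃ • y.2.2.1) ≤ (2*C+1) * ‖x - y‖ := by
    rw [dist_eq_norm, ← smul_sub, norm_smul, Real.norm_eq_abs]
    nlinarith [abs_nonneg c₃, norm_nonneg (x.2.2.1 - y.2.2.1)]
  exact max_le k1 (max_le k2 (max_le k3 k4))

end Aux

abbrev W4 := E4 × E4 × E4 × E4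

/-- the `v`-part of the candidate -/
def cc (β : ℝ) (w : E4) (v : ℝ) : E4 :=
  (β^2)⁻¹ • (Real.cos (β*v) • w + (β * Real.sin (β*v)) • ee 2)

/-- derivative of `cc` -/
def cc' (β : ℝ) (w : E4) (v : ℝ) : E4 :=
  (β^2)⁻¹ • ((-(β * Real.sin (β*v))) • w + (β^2 * Real.cos (β*v)) • ee 2)

/-- candidate for `l` -/
def LL (z : ℝ → ℝ) (p : ℝ → E4) (β : ℝ) (w : E4) (q : ℝ × ℝ) : E4 :=
  Real.exp (z q.1 / 2) • (p q.1 + cc β w q.2)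

/-- candidate for `pu l` -/
def LLu (z : ℝ → ℝ) (p : ℝ → E4) (β : ℝ) (w : E4) (q : ℝ × ℝ) : E4 :=
  Real.exp (z q.1 / 2) • ((deriv z q.1 / 2) • (p q.1 + cc β w q.2) + deriv p q.1)

/-- candidate for `pv l` -/
def LLv (z : ℝ → ℝ) (p : ℝ → E4) (β : ℝ) (w : E4) (q : ℝ × ℝ) : E4 :=
  Real.exp (z q.1 / 2) • cc' β w q.2

/-- candidate for `n` -/
def NN (z : ℝ → ℝ) (p : ℝ → E4) (β : ℝ) (w : E4) (q : ℝ × ℝ) : E4 :=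
  Real.exp (-(z q.1) / 2) • (p q.1 + cc β w q.2)
    - Real.exp (z q.1 / 2) • ((deriv z q.1 / 2) • deriv p q.1 + β ^ 2 • p q.1)

/-- the candidate 4-tuple -/
def YY (z : ℝ → ℝ) (p : ℝ → E4) (β : ℝ) (w : E4) (q : ℝ × ℝ) : W4 :=
  (LL z p β w q, LLu z p β w q, LLv z p β w q, NN z p β w q)

/-- u-direction vector field -/
def fA (z : ℝ → ℝ) (u : ℝ) (y : W4) : W4 :=
  (y.2.1, (deriv z u / 2) • y.2.1 - Real.exp (z u) • y.1 + y.2.2.2,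
   (deriv z u / 2) • y.2.2.1, -(Real.exp (-z u) • y.2.1))

/-- v-direction vector field -/
def fB (z : ℝ → ℝ) (u : ℝ) (y : W4) : W4 :=
  (y.2.2.1, (deriv z u / 2) • y.2.2.1,
   -((deriv z u / 2) • y.2.1) - Real.exp (z u) • y.1 - y.2.2.2,
   Real.exp (-z u) • y.2.2.1)

lemma hasDerivAt_cc (β : ℝ) (w : E4) (v1 : ℝ) :
    HasDerivAt (cc β w) (cc' β w v1) v1 := by
  have hlin : HasDerivAt (fun y : ℝ => β * y) β v1 := by
    simpa using (hasDerivAt_id v1).const_mul β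
  have hs : HasDerivAt (fun y : ℝ => Real.sin (β * y)) (Real.cos (β * v1) * β) v1 :=
    (Real.hasDerivAt_sin (β * v1)).comp v1 hlin
  have hcos : HasDerivAt (fun y : ℝ => Real.cos (β * y)) (-Real.sin (β * v1) * β) v1 :=
    (Real.hasDerivAt_cos (β * v1)).comp v1 hlin
  have h := ((hcos.smul_const w).add ((hs.const_mul β).smul_const (ee 2))).const_smul ((β^2)⁻¹)
  refine h.congr_deriv ?_
  simp only [cc']
  match_scalars <;> ring

lemma hasDerivAt_cc' (β : ℝ) (w : E4) (v1 : ℝ) :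
    HasDerivAt (cc' β w) (-(β^2) • cc β w v1) v1 := by
  have hlin : HasDerivAt (fun y : ℝ => β * y) β v1 := by
    simpa using (hasDerivAt_id v1).const_mul β
  have hs : HasDerivAt (fun y : ℝ => Real.sin (β * y)) (Real.cos (β * v1) * β) v1 :=
    (Real.hasDerivAt_sin (β * v1)).comp v1 hlin
  have hcos : HasDerivAt (fun y : ℝ => Real.cos (β * y)) (-Real.sin (β * v1) * β) v1 :=
    (Real.hasDerivAt_cos (β * v1)).comp v1 hlin
  have h := ((((hs.const_mul β).neg).smul_const w).add ((hcos.const_mul (β^2)).smul_const (ee 2))).const_smul ((β^2)⁻¹)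
  refine h.congr_deriv ?_
  simp only [cc, cc']
  match_scalars <;> ring

lemma hYv (z : ℝ → ℝ) (p : ℝ → E4) (β : ℝ) (w : E4)
    (hcons : ∀ u : ℝ,
      (deriv z u) ^ 2 = 4 * β ^ 2 - 4 * (Real.exp (z u) + Real.exp (-(z u))))
    (hβne : β ≠ 0) (u0 v1 : ℝ) :
    HasDerivAt (fun y : ℝ => YY z p β w (u0, y)) (fB z u0 (YY z p β w (u0, v1))) v1 := by
  have hc := hasDerivAt_cc β w v1
  have hc' := hasDerivAt_cc' β w v1
  have hab : Real.exp (z u0/2) * Real.exp (-(z u0)/2) = 1 := by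
    rw [← Real.exp_add]; ring_nf; exact Real.exp_zero
  have hE : Real.exp (z u0) = Real.exp (z u0/2)^2 := by
    rw [sq, ← Real.exp_add]; ring_nf
  have hF : Real.exp (-(z u0)) = Real.exp (-(z u0)/2)^2 := by
    rw [sq, ← Real.exp_add]; ring_nf
  have hcn : (deriv z u0)^2
      = 4*β^2 - 4*(Real.exp (z u0/2)^2 + Real.exp (-(z u0)/2)^2) := by
    rw [← hE, ← hF]; exact hcons u0
  have hβ2 : (β^2) * (β^2)⁻¹ = 1 := mul_inv_cancel₀ (pow_ne_zero 2 hβne)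
  have d0 : HasDerivAt (fun y => LL z p β w (u0, y))
      (Real.exp (z u0 / 2) • cc' β w v1) v1 :=
    (hc.const_add (p u0)).const_smul (Real.exp (z u0 / 2))
  have d1 : HasDerivAt (fun y => LLu z p β w (u0, y))
      (Real.exp (z u0 / 2) • ((deriv z u0 / 2) • cc' β w v1)) v1 :=
    ((((hc.const_add (p u0)).const_smul (deriv z u0 / 2)).add_const
      (deriv p u0)).const_smul (Real.exp (z u0 / 2)))
  have d2 : HasDerivAt (fun y => LLv z p β w (u0, y))
      (Real.exp (z u0 / 2) • ((-(β^2)) • cc β w v1)) v1 :=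
    hc'.const_smul (Real.exp (z u0 / 2))
  have d3 : HasDerivAt (fun y => NN z p β w (u0, y))
      (Real.exp (-(z u0) / 2) • cc' β w v1) v1 :=
    ((hc.const_add (p u0)).const_smul (Real.exp (-(z u0) / 2))).sub_const
      (Real.exp (z u0 / 2) • ((deriv z u0 / 2) • deriv p u0 + β ^ 2 • p u0))
  have hD := d0.prodMk (d1.prodMk (d2.prodMk d3))
  refine hD.congr_deriv (Eq.symm ?_)
  simp only [fB, YY, LL, LLu, LLv, NN, cc, cc', Prod.mk.injEq]
  simp only [hE, hF]
  refine ⟨?_, ?_, ?_, ?_⟩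
  · trivial
  · match_scalars <;> ring
  · match_scalars
    · linear_combination (Real.exp (-(z u0)/2)) * hab - (Real.exp (z u0/2)/4) * hcn
    · linear_combination (Real.exp (-(z u0)/2) * (β^2)⁻¹ * Real.cos (β*v1)) * hab
        - (Real.exp (z u0/2) * (β^2)⁻¹ * Real.cos (β*v1) / 4) * hcn
    · linear_combination (Real.exp (-(z u0)/2) * β * (β^2)⁻¹ * Real.sin (β*v1)) * hab
        - (Real.exp (z u0/2) * β * (β^2)⁻¹ * Real.sin (β*v1) / 4) * hcn
    · ring
  · match_scalars
    · linear_combination (-(Real.exp (-(z u0)/2) * β * (β^2)⁻¹ * Real.sin (β*v1))) * hab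
    · linear_combination (Real.exp (-(z u0)/2) * β^2 * (β^2)⁻¹ * Real.cos (β*v1)) * hab

lemma hYu (z : ℝ → ℝ) (p : ℝ → E4) (β : ℝ) (w : E4)
    (hdz : Differentiable ℝ z) (hdz' : Differentiable ℝ (deriv z))
    (hdp : Differentiable ℝ p) (hdp' : Differentiable ℝ (deriv p))
    (hz'' : ∀ u : ℝ, deriv (deriv z) u = -2 * (Real.exp (z u) - Real.exp (-(z u))))
    (hp'' : ∀ u : ℝ, deriv (deriv p) u = -(deriv z u • deriv p u) - β ^ 2 • p u)
    (hcons : ∀ u : ℝ,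
      (deriv z u) ^ 2 = 4 * β ^ 2 - 4 * (Real.exp (z u) + Real.exp (-(z u))))
    (u1 v1 : ℝ) :
    HasDerivAt (fun x : ℝ => YY z p β w (x, v1)) (fA z u1 (YY z p β w (u1, v1))) u1 := by
  set k : E4 := cc β w v1 with hk
  set k' : E4 := cc' β w v1 with hk'
  have hA : HasDerivAt (fun x => Real.exp (z x / 2))
      (Real.exp (z u1 / 2) * (deriv z u1 / 2)) u1 := ((hdz u1).hasDerivAt.div_const 2).exp
  have hB : HasDerivAt (fun x => Real.exp (-(z x) / 2))
      (Real.exp (-(z u1) / 2) * (-(deriv z u1) / 2)) u1 :=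
    (((hdz u1).hasDerivAt.neg).div_const 2).exp
  have hzh : HasDerivAt (fun x => deriv z x / 2) (deriv (deriv z) u1 / 2) u1 :=
    (hdz' u1).hasDerivAt.div_const 2
  have hpk : HasDerivAt (fun x => p x + k) (deriv p u1) u1 := (hdp u1).hasDerivAt.add_const k
  have d0 := hA.smul hpk
  have d1inner := (hzh.smul hpk).add (hdp' u1).hasDerivAt
  have d1 := hA.smul d1inner
  have d2 := hA.smul_const k'
  have d3a := hB.smul hpk
  have d3binner := (hzh.smul (hdp' u1).hasDerivAt).add ((hdp u1).hasDerivAt.const_smul (β^2))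
  have d3b := hA.smul d3binner
  have d3 := d3a.sub d3b
  have hD := d0.prodMk (d1.prodMk (d2.prodMk d3))
  have hab : Real.exp (z u1/2) * Real.exp (-(z u1)/2) = 1 := by
    rw [← Real.exp_add]; ring_nf; exact Real.exp_zero
  have hE : Real.exp (z u1) = Real.exp (z u1/2)^2 := by
    rw [sq, ← Real.exp_add]; ring_nf
  have hF : Real.exp (-(z u1)) = Real.exp (-(z u1)/2)^2 := by
    rw [sq, ← Real.exp_add]; ring_nf
  have hc : (deriv z u1)^2
      = 4*β^2 - 4*(Real.exp (z u1/2)^2 + Real.exp (-(z u1)/2)^2) := by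
    rw [← hE, ← hF]; exact hcons u1
  refine hD.congr_deriv (Eq.symm ?_)
  simp only [fA, YY, LL, LLu, LLv, NN, Prod.mk.injEq, Pi.add_apply, Pi.smul_apply, Pi.smul_apply']
  refine ⟨?_, ?_, ?_, ?_⟩
  · match_scalars <;> ring
  · rw [hz'' u1, hp'' u1, hE, hF]
    match_scalars
    · linear_combination (-(Real.exp (-(z u1)/2))) * hab
    · linear_combination (-(Real.exp (-(z u1)/2))) * hab
    · ring
  · match_scalars <;> ring
  · rw [hz'' u1, hp'' u1, hE, hF]
    match_scalars
    · linear_combination (-(Real.exp (-(z u1)/2) * deriv z u1)/2) * hab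
    · linear_combination (-(Real.exp (-(z u1)/2) * deriv z u1)/2) * hab
    · linear_combination (Real.exp (-(z u1)/2)) * hab - (Real.exp (z u1/2)/4) * hc


/-- explicit formula for generalized tori of second type: with
`β = √(t² + 2 cosh s)`, `z` the solution of `z'' + 4 sinh z = 0`, `z(0) = s`, `z'(0) = 2t`,
and `p` the solution of `p'' + z'·p' + β²·p = 0` with the stated initial data, any smooth
solution `(l,n)` of the derivative system of a generalized torus of second type with the
stated initial conditions satisfies
`l(u,v) = e^{z(u)/2}·p(u) + (e^{z(u)/2}/β²)·[cos βv·(e^{s/2}e₁ + t e₂ + e^{−s/2}e₄) + β sin βv·e₃]`. -/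
theorem stmt_17 (s t β : ℝ) (hβ : β = Real.sqrt (t ^ 2 + 2 * Real.cosh s))
    (z : ℝ → ℝ) (hz : ContDiff ℝ 2 z)
    (hzode : ∀ u : ℝ, deriv (deriv z) u + 4 * Real.sinh (z u) = 0)
    (hz0 : z 0 = s) (hz0' : deriv z 0 = 2 * t)
    (p : ℝ → E4) (hp : ContDiff ℝ 2 p)
    (hpode : ∀ u : ℝ, deriv (deriv p) u + deriv z u • deriv p u + β ^ 2 • p u = 0)
    (hp0 : p 0 = (1 / β ^ 2) •
      ((Real.exp (-s / 2) * (t ^ 2 + Real.exp (-s))) • ee 0 - t • ee 1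
        - Real.exp (-s / 2) • ee 3))
    (hp0' : deriv p 0 = -(t * Real.exp (-s / 2)) • ee 0 + ee 1)
    (l n : ℝ × ℝ → E4)
    (hl : ContDiff ℝ (⊤ : ℕ∞) l) (hn : ContDiff ℝ (⊤ : ℕ∞) n)
    (huu : ∀ q : ℝ × ℝ, pu (pu l) q - (deriv z q.1 / 2) • pu l q
      + Real.exp (z q.1) • l q - n q = 0)
    (huv : ∀ q : ℝ × ℝ, pv (pu l) q - (deriv z q.1 / 2) • pv l q = 0)
    (hvv : ∀ q : ℝ × ℝ, pv (pv l) q + (deriv z q.1 / 2) • pu l q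
      + Real.exp (z q.1) • l q + n q = 0)
    (hnu : ∀ q : ℝ × ℝ, pu n q + Real.exp (-z q.1) • pu l q = 0)
    (hnv : ∀ q : ℝ × ℝ, pv n q - Real.exp (-z q.1) • pv l q = 0)
    (hl0 : l (0, 0) = ee 0)
    (hlu0 : pu l (0, 0) = Real.exp (s / 2) • ee 1)
    (hlv0 : pv l (0, 0) = Real.exp (s / 2) • ee 2)
    (hn0 : n (0, 0) = ee 3) :
    ∀ q : ℝ × ℝ,
      l q = Real.exp (z q.1 / 2) • p q.1 + (Real.exp (z q.1 / 2) / β ^ 2) •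
        (Real.cos (β * q.2) •
            (Real.exp (s / 2) • ee 0 + t • ee 1 + Real.exp (-s / 2) • ee 3)
          + (β * Real.sin (β * q.2)) • ee 2) := by
  -- ====== scalar preliminaries ======
  have hβsqpos : 0 < t ^ 2 + 2 * Real.cosh s := by
    nlinarith [Real.one_le_cosh s, sq_nonneg t]
  have hβpos : 0 < β := hβ ▸ Real.sqrt_pos.mpr hβsqpos
  have hβne : β ≠ 0 := ne_of_gt hβpos
  have hβsq : β ^ 2 = t ^ 2 + 2 * Real.cosh s := by rw [hβ, Real.sq_sqrt hβsqpos.le]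
  have hz2 : ContDiff ℝ ((1 : ℕ) + 1) z := by exact_mod_cast hz
  have hz1 : ContDiff ℝ 1 (deriv z) := (contDiff_succ_iff_deriv.mp hz2).2.2
  have hdz : Differentiable ℝ z := hz.differentiable (by norm_num)
  have hdz' : Differentiable ℝ (deriv z) := hz1.differentiable one_ne_zero
  have hp2 : ContDiff ℝ ((1 : ℕ) + 1) p := by exact_mod_cast hp
  have hp1 : ContDiff ℝ 1 (deriv p) := (contDiff_succ_iff_deriv.mp hp2).2.2
  have hdp : Differentiable ℝ p := hp.differentiable (by norm_num)
  have hdp' : Differentiable ℝ (deriv p) := hp1.differentiable one_ne_zero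
  have hz'' : ∀ u : ℝ, deriv (deriv z) u = -2 * (Real.exp (z u) - Real.exp (-(z u))) := by
    intro u
    have h := hzode u
    rw [Real.sinh_eq] at h
    linarith
  have hp'' : ∀ u : ℝ, deriv (deriv p) u = -(deriv z u • deriv p u) - β ^ 2 • p u := by
    intro u
    have h := hpode u
    have h2 : deriv (deriv p) u + (deriv z u • deriv p u + β ^ 2 • p u) = 0 := by
      rw [← h]; module
    rw [← sub_eq_zero, ← h2]; module
  -- ====== conservation law ======
  have hcons : ∀ u : ℝ,
      (deriv z u) ^ 2 = 4 * β ^ 2 - 4 * (Real.exp (z u) + Real.exp (-(z u))) := by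
    have hEd : ∀ x : ℝ, HasDerivAt
        (fun y => (deriv z y) ^ 2 + 4 * (Real.exp (z y) + Real.exp (-(z y)))) 0 x := by
      intro x
      have h1 : HasDerivAt (fun y => (deriv z y) ^ 2)
          (2 * deriv z x * deriv (deriv z) x) x := by
        have := ((hdz' x).hasDerivAt).pow 2
        exact this.congr_deriv (by push_cast; ring)
      have h2 : HasDerivAt (fun y => Real.exp (z y)) (Real.exp (z x) * deriv z x) x :=
        ((hdz x).hasDerivAt).exp
      have h3 : HasDerivAt (fun y => Real.exp (-(z y)))
          (Real.exp (-(z x)) * (-(deriv z x))) x := (((hdz x).hasDerivAt).neg).exp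
      have h := h1.add ((h2.add h3).const_mul 4)
      refine h.congr_deriv (Eq.symm ?_)
      rw [hz'' x]
      ring
    have hconst : ∀ u : ℝ,
        (deriv z u) ^ 2 + 4 * (Real.exp (z u) + Real.exp (-(z u)))
          = (deriv z 0) ^ 2 + 4 * (Real.exp (z 0) + Real.exp (-(z 0))) := by
      intro u
      exact is_const_of_deriv_eq_zero (fun x => (hEd x).differentiableAt)
        (fun x => (hEd x).deriv) u 0
    intro u
    have h := hconst u
    rw [hz0, hz0'] at h
    rw [Real.cosh_eq] at hβsq
    linarith
  -- ====== the candidate and the solution tuple ======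
  set w : E4 := Real.exp (s / 2) • ee 0 + t • ee 1 + Real.exp (-s / 2) • ee 3 with hwdef
  set XX : ℝ × ℝ → W4 := fun q => (l q, pu l q, pv l q, n q) with hXX
  have hdl : Differentiable ℝ l := hl.differentiable (by simp)
  have hdn : Differentiable ℝ n := hn.differentiable (by simp)
  have hdpul : Differentiable ℝ (pu l) :=
    (contDiff_pu hl).differentiable (by simp)
  have hdpvl : Differentiable ℝ (pv l) :=
    (contDiff_pv hl).differentiable (by simp)
  -- ====== derivative facts for the solution tuple ======
  have hXu : ∀ u1 v1 : ℝ, HasDerivAt (fun x => XX (x, v1)) (fA z u1 (XX (u1, v1))) u1 := by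
    intro u1 v1
    have d1 := hasDerivAt_slice_u hdl u1 v1
    have d2 := hasDerivAt_slice_u hdpul u1 v1
    have d3 := hasDerivAt_slice_u hdpvl u1 v1
    have d4 := hasDerivAt_slice_u hdn u1 v1
    have hD := d1.prodMk (d2.prodMk (d3.prodMk d4))
    convert hD using 1
    simp only [fA, hXX, Prod.mk.injEq]
    refine ⟨trivial, ?_, ?_, ?_⟩
    · linear_combination (norm := module) - huu (u1, v1)
    · rw [pu_pv_comm hl]
      linear_combination (norm := module) - huv (u1, v1)
    · linear_combination (norm := module) - hnu (u1, v1)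
  have hXv : ∀ u1 v1 : ℝ, HasDerivAt (fun y => XX (u1, y)) (fB z u1 (XX (u1, v1))) v1 := by
    intro u1 v1
    have d1 := hasDerivAt_slice_v hdl u1 v1
    have d2 := hasDerivAt_slice_v hdpul u1 v1
    have d3 := hasDerivAt_slice_v hdpvl u1 v1
    have d4 := hasDerivAt_slice_v hdn u1 v1
    have hD := d1.prodMk (d2.prodMk (d3.prodMk d4))
    convert hD using 1
    simp only [fB, hXX, Prod.mk.injEq]
    refine ⟨trivial, ?_, ?_, ?_⟩
    · linear_combination (norm := module) - huv (u1, v1)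
    · linear_combination (norm := module) - hvv (u1, v1)
    · linear_combination (norm := module) - hnv (u1, v1)
  -- ====== continuity ======
  have hXcont : Continuous XX := by
    rw [hXX]
    exact hl.continuous.prodMk (((contDiff_pu hl).continuous).prodMk
      (((contDiff_pv hl).continuous).prodMk hn.continuous))
  have hczd : Continuous (deriv z) := hz1.continuous
  have hcz : Continuous z := hz.continuous
  have hcp : Continuous p := hp.continuous
  have hcpd : Continuous (deriv p) := hp1.continuous
  have hYcont : Continuous (YY z p β w) := by
    unfold YY LL LLu LLv NN cc cc'
    fun_prop
  -- ====== initial values agree ======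
  have hABs : Real.exp (s/2) * Real.exp (-s/2) = 1 := by
    rw [← Real.exp_add]; ring_nf; exact Real.exp_zero
  have hEs : Real.exp (-s) = Real.exp (-s/2)^2 := by
    rw [sq, ← Real.exp_add]; ring_nf
  have hβs : β^2 = t^2 + Real.exp (s/2)^2 + Real.exp (-s/2)^2 := by
    rw [hβsq, Real.cosh_eq,
      show Real.exp s = Real.exp (s/2)^2 by rw [sq, ← Real.exp_add]; ring_nf,
      show Real.exp (-s) = Real.exp (-s/2)^2 by rw [sq, ← Real.exp_add]; ring_nf]
    ring
  have hβ2 : (β^2) * (β^2)⁻¹ = 1 := mul_inv_cancel₀ (pow_ne_zero 2 hβne)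
  have key0 : XX (0, 0) = YY z p β w (0, 0) := by
    simp only [hXX, YY, LL, LLu, LLv, NN, cc, cc', Prod.mk.injEq]
    rw [hl0, hlu0, hlv0, hn0, hz0, hz0', hp0, hp0']
    simp only [mul_zero, Real.cos_zero, Real.sin_zero, zero_smul, one_smul, neg_zero,
      zero_add, add_zero]
    rw [hwdef, hEs]
    refine ⟨?_, ?_, ?_, ?_⟩
    · match_scalars
      · linear_combination (-1 : ℝ) * hβ2 + (β^2)⁻¹ * hβs
          - ((β^2)⁻¹ * (t^2 + Real.exp (-s/2)^2)) * hABs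
      · ring
      · ring
    · match_scalars
      · ring
      · linear_combination (-(Real.exp (s/2)*t*Real.exp (-s/2))) * hβ2 + (Real.exp (s/2)*t*(β^2)⁻¹*Real.exp (-s/2)) * hβs
          + (Real.exp (s/2)^2*t*(β^2)⁻¹) * hABs
      · ring
    · match_scalars
      · linear_combination (-(Real.exp (s/2))) * hβ2
    · match_scalars
      · linear_combination (-(Real.exp (s/2)*Real.exp (-s/2))) * hβ2 - hABs
      · linear_combination (Real.exp (s/2)*Real.exp (-s/2)*t^2 + Real.exp (s/2)*Real.exp (-s/2)^3 - Real.exp (-s/2)^2) * hβ2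
          + ((β^2)⁻¹*Real.exp (-s/2)^2) * hβs + (Real.exp (-s/2)^2 + (β^2)⁻¹*Real.exp (s/2)*Real.exp (-s/2)) * hABs
      · linear_combination (-(t*Real.exp (s/2))) * hβ2
  -- ====== uniqueness along the u-axis ======
  have key1 : ∀ u1 : ℝ, XX (u1, 0) = YY z p β w (u1, 0) := by
    intro u1
    set R : ℝ := |u1| + 1 with hRdef
    have hRpos : 0 < R := by positivity
    have hcont : Continuous fun x => |deriv z x / 2| + Real.exp (z x) + Real.exp (-z x) :=
      ((hczd.div_const 2).abs.add (Real.continuous_exp.comp hcz)).add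
        (Real.continuous_exp.comp hcz.neg)
    obtain ⟨C, hC⟩ := (isCompact_Icc (a := -R) (b := R)).exists_bound_of_continuousOn
      hcont.continuousOn
    have hb : ∀ x ∈ Set.Icc (-R) R,
        |deriv z x / 2| ≤ C ∧ |Real.exp (z x)| ≤ C ∧ |Real.exp (-z x)| ≤ C := by
      intro x hx
      have h := hC x hx
      rw [Real.norm_eq_abs, abs_of_nonneg (by positivity)] at h
      have e1 := Real.exp_pos (z x)
      have e2 := Real.exp_pos (-z x)
      have h0 : (0:ℝ) ≤ |deriv z x / 2| := abs_nonneg _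
      exact ⟨by linarith, by rw [abs_of_pos e1]; linarith, by rw [abs_of_pos e2]; linarith⟩
    set cl : ℝ → ℝ := fun x => max (-R) (min x R) with hcl
    have hclmem : ∀ x : ℝ, cl x ∈ Set.Icc (-R) R := by
      intro x
      exact ⟨le_max_left _ _, max_le (by linarith) (min_le_right _ _)⟩
    have hcleq : ∀ x ∈ Set.Ioo (-R) R, cl x = x := by
      intro x hx
      simp only [hcl]
      rw [min_eq_left hx.2.le, max_eq_right hx.1.le]
    have hlipt : ∀ x : ℝ,
        LipschitzOnWith (Real.toNNReal (2*C+1)) (fA z (cl x)) Set.univ := by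
      intro x
      obtain ⟨b1, b2, b3⟩ := hb (cl x) (hclmem x)
      exact (lipA b1 b2 b3).lipschitzOnWith
    have ht0 : (0:ℝ) ∈ Set.Ioo (-R) R := by
      constructor <;> [linarith [abs_nonneg u1]; linarith [abs_nonneg u1]]
    have hfd : ∀ x ∈ Set.Ioo (-R) R,
        HasDerivAt (fun y => XX (y, 0)) (fA z (cl x) (XX (x, 0))) x := by
      intro x hx
      rw [hcleq x hx]
      exact hXu x 0
    have hgd : ∀ x ∈ Set.Ioo (-R) R,
        HasDerivAt (fun y => YY z p β w (y, 0)) (fA z (cl x) (YY z p β w (x, 0))) x := by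
      intro x hx
      rw [hcleq x hx]
      exact hYu z p β w hdz hdz' hdp hdp' hz'' hp'' hcons x 0
    have heq := ODE_solution_unique_of_mem_Icc (v := fun x => fA z (cl x))
      (s := fun _ => Set.univ) (K := Real.toNNReal (2*C+1))
      (f := fun x => XX (x, 0)) (g := fun x => YY z p β w (x, 0))
      (a := -R) (b := R) (t₀ := 0) (fun x _ => hlipt x) ht0
      (hXcont.comp (continuous_id.prodMk continuous_const)).continuousOn
      hfd (fun _ _ => trivial)
      (hYcont.comp (continuous_id.prodMk continuous_const)).continuousOn
      hgd (fun _ _ => trivial) key0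
    have hmem : u1 ∈ Set.Icc (-R) R := by
      constructor
      · linarith [neg_abs_le u1]
      · linarith [le_abs_self u1]
    exact heq hmem
  -- ====== uniqueness along the v-direction ======
  intro q
  obtain ⟨u0, v0⟩ := q
  have key2 : XX (u0, v0) = YY z p β w (u0, v0) := by
    set R : ℝ := |v0| + 1 with hRdef
    have hRpos : 0 < R := by positivity
    set C : ℝ := |deriv z u0 / 2| + Real.exp (z u0) + Real.exp (-z u0) with hCdef
    have e1 := Real.exp_pos (z u0)
    have e2 := Real.exp_pos (-z u0)
    have h0 : (0:ℝ) ≤ |deriv z u0 / 2| := abs_nonneg _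
    have b1 : |deriv z u0 / 2| ≤ C := by rw [hCdef]; linarith
    have b2 : |Real.exp (z u0)| ≤ C := by rw [hCdef, abs_of_pos e1]; linarith
    have b3 : |Real.exp (-z u0)| ≤ C := by rw [hCdef, abs_of_pos e2]; linarith
    have hlipt : ∀ x : ℝ,
        LipschitzOnWith (Real.toNNReal (2*C+1)) (fB z u0) Set.univ := by
      intro _
      exact (lipB b1 b2 b3).lipschitzOnWith
    have ht0 : (0:ℝ) ∈ Set.Ioo (-R) R := by
      constructor <;> [linarith [abs_nonneg v0]; linarith [abs_nonneg v0]]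
    have heq := ODE_solution_unique_of_mem_Icc (v := fun _ => fB z u0)
      (s := fun _ => Set.univ) (K := Real.toNNReal (2*C+1))
      (f := fun y => XX (u0, y)) (g := fun y => YY z p β w (u0, y))
      (a := -R) (b := R) (t₀ := 0) (fun x _ => hlipt x) ht0
      (hXcont.comp (continuous_const.prodMk continuous_id)).continuousOn
      (fun x _ => hXv u0 x) (fun _ _ => trivial)
      (hYcont.comp (continuous_const.prodMk continuous_id)).continuousOn
      (fun x _ => hYv z p β w hcons hβne u0 x) (fun _ _ => trivial)
      (key1 u0)
    have hmem : v0 ∈ Set.Icc (-R) R := by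
      constructor
      · linarith [neg_abs_le v0]
      · linarith [le_abs_self v0]
    exact heq hmem
  -- ====== conclusion ======
  have hfst : l (u0, v0) = LL z p β w (u0, v0) := congrArg Prod.fst key2
  rw [hfst]
  simp only [LL, cc, hwdef]
  match_scalars <;> ring
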